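/- Let n = 2^s, s ≥ 2. Define G as the set of g(z) = Σ_{i=0}^{n-1} b_i z^i ∈ F_2[z]/(z^n-1) with b_0 = 1, b_{n-1} = 0, b_2 = b_{n-3} = 0, and b_i = b_{n-1-i} for all i ∈ {1, 3, 4, ..., n/2 - 1}; and H as the set of h(z) = Σ a_i z^i with a_0 = 1, a_{n/2} = 0, a_i = a_{n-i} for 1 ≤ i ≤ n/2-1, and Σ_{1≤i≤n/2-1, i odd} a_i = 0. Then the map g ↦ g·g* is a bijection from G to H; in particular every h ∈ H has a unique factorization h = g·g* with g ∈ G. -/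

import Mathlib

open Polynomial Finset

/-- Cyclic convolution: multiplication in `F[x]/(x^n - 1)` on coefficient vectors. -/
def cconv (n : ℕ) [NeZero n] {F : Type*} [CommRing F] (a b : ZMod n → F) : ZMod n → F :=
  fun k => ∑ i : ZMod n, a i * b (k - i)

/-- Reciprocal polynomial `g*(z) = Σ b_i z^{n-i}` on coefficient vectors. -/
def cstar (n : ℕ) {F : Type*} (a : ZMod n → F) : ZMod n → F := fun i => a (-i)

/-- The polynomial `Σ_{i=0}^{n-1} a_i x^i` attached to a coefficient vector. -/
noncomputable def toPoly (n : ℕ) [NeZero n] {F : Type*} [CommRing F] (a : ZMod n → F) : Polynomial F :=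
  ∑ i : Fin n, Polynomial.C (a ((i : ℕ) : ZMod n)) * Polynomial.X ^ (i : ℕ)

namespace Stmt7Aux

lemma z2_mul_self (x : ZMod 2) : x * x = x := by revert x; decide

lemma z2_add_self (x : ZMod 2) : x + x = 0 := by revert x; decide

lemma z2_add_eq_zero {x y : ZMod 2} (h : x + y = 0) : x = y := by revert h; revert x y; decide

variable {n : ℕ} [NeZero n]

lemma castv (k : ZMod n) : ((k.val : ℕ) : ZMod n) = k := ZMod.natCast_zmod_val k

lemma valc {w : ℕ} (h : w < n) : ((w : ZMod n)).val = w := ZMod.val_cast_of_lt h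

/-- convolution square lemma -/
lemma sum_mul_reflect (f : ZMod n → ZMod 2) (c : ZMod n) :
    ∑ i : ZMod n, f i * f (c - i) = ∑ i ∈ Finset.univ.filter (fun i => 2*i = c), f i := by
  rw [← Finset.sum_filter_add_sum_filter_not Finset.univ (fun i => 2*i = c)
    (fun i => f i * f (c - i))]
  have h1 : ∑ i ∈ Finset.univ.filter (fun i => 2*i = c), f i * f (c - i)
      = ∑ i ∈ Finset.univ.filter (fun i => 2*i = c), f i := by
    refine Finset.sum_congr rfl (fun i hi => ?_)
    simp only [Finset.mem_filter] at hi
    have hci : c - i = i := by linear_combination -hi.2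
    rw [hci, z2_mul_self]
  have h2 : ∑ i ∈ Finset.univ.filter (fun i => ¬ 2*i = c), f i * f (c - i) = 0 := by
    refine Finset.sum_involution (fun i _ => c - i) (fun i hi => ?_) (fun i hi hne heq => ?_)
      (fun i hi => ?_) (fun i hi => ?_)
    · have : c - (c - i) = i := by ring
      rw [this, mul_comm, z2_add_self]
    · simp only [Finset.mem_filter, Finset.mem_univ, true_and] at hi
      exact hi (by linear_combination -heq)
    · simp only [Finset.mem_filter, Finset.mem_univ, true_and] at hi ⊢
      intro h
      exact hi (by linear_combination -h)
    · ring
  rw [h1, h2, add_zero]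

end Stmt7Aux
section P2
open Stmt7Aux Finset
variable {n : ℕ} [NeZero n]

lemma two_mul_eq_zero_iff (h2 : 2 ∣ n) (x : ZMod n) :
    2 * x = 0 ↔ x = 0 ∨ x = ((n/2 : ℕ) : ZMod n) := by
  have hn0 : n ≠ 0 := NeZero.ne n
  constructor
  · intro h
    have hx : ((x.val : ℕ) : ZMod n) = x := castv x
    have hv : x.val < n := ZMod.val_lt x
    have h' : ((2 * x.val : ℕ) : ZMod n) = 0 := by push_cast; rw [hx]; exact h
    rw [ZMod.natCast_eq_zero_iff] at h'
    obtain ⟨c, hc⟩ := h'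
    have hc2 : c = 0 ∨ c = 1 := by
      rcases Nat.lt_or_ge c 2 with h | h
      · omega
      · exfalso; nlinarith
    rcases hc2 with rfl | rfl
    · left
      have hv0 : x.val = 0 := by omega
      rw [← hx, hv0]; simp
    · right
      have hv0 : x.val = n/2 := by omega
      rw [← hx, hv0]
  · rintro (rfl | rfl)
    · ring
    · have h1 : (2 : ZMod n) * ((n/2 : ℕ) : ZMod n) = ((2 * (n/2) : ℕ) : ZMod n) := by
        push_cast; ring
      have h3 : (2 * (n/2) : ℕ) = n := by omega
      rw [h1, h3, ZMod.natCast_self]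

lemma half_ne_zero (hn4 : 4 ≤ n) (h2 : 2 ∣ n) : ((n/2 : ℕ) : ZMod n) ≠ 0 := by
  intro h
  have := valc (n := n) (w := n/2) (by omega)
  rw [h, ZMod.val_zero] at this
  omega

lemma sum_filter_two_mul (hn4 : 4 ≤ n) (h2 : 2 ∣ n) (f : ZMod n → ZMod 2) (j : ZMod n) :
    ∑ i ∈ Finset.univ.filter (fun i => 2*i = 2*j), f i = f j + f (j + ((n/2 : ℕ) : ZMod n)) := by
  have hset : Finset.univ.filter (fun i => 2*i = 2*j) = {j, j + ((n/2 : ℕ) : ZMod n)} := by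
    ext i
    simp only [Finset.mem_filter, Finset.mem_univ, true_and, Finset.mem_insert,
      Finset.mem_singleton]
    constructor
    · intro h
      have : 2 * (i - j) = 0 := by linear_combination h
      rcases (two_mul_eq_zero_iff h2 _).1 this with h' | h'
      · left; linear_combination h'
      · right; linear_combination h'
    · rintro (rfl | rfl)
      · rfl
      · have : 2 * ((n/2 : ℕ) : ZMod n) = 0 := (two_mul_eq_zero_iff h2 _).2 (Or.inr rfl)
        linear_combination this
  rw [hset, Finset.sum_pair]
  intro h
  exact half_ne_zero hn4 h2 (by linear_combination -h)

lemma filter_odd_empty (h2 : 2 ∣ n) (c : ZMod n) (hc : (ZMod.castHom h2 (ZMod 2)) c = 1) :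
    Finset.univ.filter (fun i : ZMod n => 2*i = c) = ∅ := by
  ext i
  simp only [Finset.mem_filter, Finset.mem_univ, true_and, Finset.notMem_empty, iff_false]
  intro h
  apply_fun (ZMod.castHom h2 (ZMod 2)) at h
  rw [map_mul, map_ofNat, hc] at h
  have h0 : (2 : ZMod 2) * (ZMod.castHom h2 (ZMod 2)) i = 0 := by
    have : (2 : ZMod 2) = 0 := rfl
    rw [this, zero_mul]
  rw [h0] at h
  exact one_ne_zero h.symm
  
end P2
section P3
open Stmt7Aux Finset
variable {n : ℕ} [NeZero n]

lemma sum_range_double {M : Type*} [AddCommMonoid M] (f : ℕ → M) (N : ℕ) :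
    ∑ i ∈ Finset.range (2*N), f i = ∑ j ∈ Finset.range N, (f (2*j) + f (2*j+1)) := by
  induction N with
  | zero => simp
  | succ N ih =>
      rw [Finset.sum_range_succ, ← ih, Nat.mul_succ, Finset.sum_range_succ, Finset.sum_range_succ]
      ring_nf
      abel

lemma dyadic_sum (d : ZMod n → ZMod 2)
    (hrec : ∀ k : ZMod n,
      ∑ i ∈ Finset.univ.filter (fun i => 2*i = k), d i = d k + d (k+1)) :
    ∀ (t : ℕ) (k : ZMod n),
      ∑ i ∈ Finset.univ.filter (fun i => (2:ZMod n)^t * i = k), d i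
        = ∑ i ∈ Finset.range (2^t), d (k + (i:ℕ)) := by
  intro t
  induction t with
  | zero =>
      intro k
      simp only [pow_zero, one_mul, pow_zero, Finset.sum_range_one, Nat.cast_zero, add_zero]
      rw [Finset.sum_filter]
      simp [Finset.sum_ite_eq' Finset.univ k d]
  | succ t ih =>
      intro k
      have fiber :
          ∑ i ∈ Finset.univ.filter (fun i => (2:ZMod n)^(t+1) * i = k), d i
            = ∑ j ∈ Finset.univ.filter (fun j => (2:ZMod n)^t * j = k),
                (∑ i ∈ Finset.univ.filter (fun i => 2*i = j), d i) := by
        rw [Finset.sum_filter, Finset.sum_filter]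
        have step1 : ∀ j : ZMod n,
            (if (2:ZMod n)^t * j = k then (∑ i ∈ Finset.univ.filter (fun i => 2*i = j), d i)
              else 0)
            = ∑ i : ZMod n, (if j = 2*i then (if (2:ZMod n)^t * j = k then d i else 0) else 0) := by
          intro j
          by_cases h : (2:ZMod n)^t * j = k
          · simp only [h, if_true]
            rw [Finset.sum_filter]
            refine Finset.sum_congr rfl (fun i _ => ?_)
            by_cases h2 : 2*i = j
            · simp [h2]
            · rw [if_neg h2, if_neg (fun hh : j = 2*i => h2 hh.symm)]
          · simp [h]
        rw [Finset.sum_congr rfl (fun j _ => step1 j), Finset.sum_comm]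
        refine Finset.sum_congr rfl (fun i _ => ?_)
        rw [Finset.sum_ite_eq' Finset.univ (2*i) (fun j => if (2:ZMod n)^t * j = k then d i else 0)]
        simp only [Finset.mem_univ, if_true]
        have : (2:ZMod n)^t * (2*i) = (2:ZMod n)^(t+1) * i := by ring
        rw [this]
      rw [fiber]
      have hrw : ∀ j ∈ Finset.univ.filter (fun j => (2:ZMod n)^t * j = k),
          (∑ i ∈ Finset.univ.filter (fun i => 2*i = j), d i) = d j + d (j+1) :=
        fun j _ => hrec j
      rw [Finset.sum_congr rfl hrw, Finset.sum_add_distrib]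
      have hshift : ∑ j ∈ Finset.univ.filter (fun j => (2:ZMod n)^t * j = k), d (j+1)
          = ∑ j ∈ Finset.univ.filter (fun j => (2:ZMod n)^t * j = k + (2:ZMod n)^t), d j := by
        rw [Finset.sum_filter, Finset.sum_filter]
        refine Fintype.sum_equiv (Equiv.addRight (1 : ZMod n)) _ _ (fun j => ?_)
        simp only [Equiv.coe_addRight]
        by_cases h : (2:ZMod n)^t * j = k
        · have h' : (2:ZMod n)^t * (j+1) = k + (2:ZMod n)^t := by rw [mul_add, h]; ring
          simp [h, h']
        · have h' : ¬ ((2:ZMod n)^t * (j+1) = k + (2:ZMod n)^t) := by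
            intro hh; apply h; linear_combination hh
          simp [h, h']
      rw [hshift, ih k, ih (k + (2:ZMod n)^t)]
      have hsplit : (2:ℕ)^(t+1) = 2^t + 2^t := by ring
      rw [hsplit, Finset.sum_range_add]
      congr 1
      refine Finset.sum_congr rfl (fun i _ => ?_)
      congr 1
      push_cast
      ring

end P3
section P4
open Stmt7Aux Finset
variable {n s : ℕ} [NeZero n]

lemma half_pow (hs : 2 ≤ s) (hn : n = 2^s) : n/2 = 2^(s-1) ∧ n = 2 * 2^(s-1) ∧ 4 ≤ n ∧ 2 ∣ n := by
  have h1 : s - 1 + 1 = s := by omega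
  have h2 : n = 2 * 2^(s-1) := by
    calc n = 2^s := hn
    _ = 2^(s-1+1) := by rw [h1]
    _ = 2^(s-1) * 2 := pow_succ 2 (s-1)
    _ = 2 * 2^(s-1) := by ring
  have h4 : 4 ≤ n := by
    rw [hn]
    calc 4 = 2^2 := by norm_num
    _ ≤ 2^s := Nat.pow_le_pow_right (by norm_num) hs
  exact ⟨by omega, h2, h4, ⟨2^(s-1), h2⟩⟩

lemma mu_pow (hs : 2 ≤ s) (hn : n = 2^s) : (2:ZMod n)^(s-1) = ((n/2 : ℕ) : ZMod n) := by
  obtain ⟨e1, _, _, _⟩ := half_pow hs hn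
  rw [e1]
  push_cast
  ring

lemma mu_mul (hs : 2 ≤ s) (hn : n = 2^s) (i : ZMod n) :
    ((n/2 : ℕ) : ZMod n) * i = 0 ∨ ((n/2 : ℕ) : ZMod n) * i = ((n/2 : ℕ) : ZMod n) := by
  obtain ⟨e1, e2, e4, ed⟩ := half_pow hs hn
  have hx : ((i.val : ℕ) : ZMod n) = i := castv i
  have h2 : ((n/2 : ℕ) : ZMod n) * 2 = 0 := by
    have : (((n/2) * 2 : ℕ) : ZMod n) = 0 := by
      have : (n/2) * 2 = n := by omega
      rw [this, ZMod.natCast_self]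
    push_cast at this
    linear_combination this
  obtain ⟨q, r, hr, hqr⟩ : ∃ q r, r < 2 ∧ i.val = 2*q + r := ⟨i.val / 2, i.val % 2, by omega, by omega⟩
  have : ((n/2 : ℕ) : ZMod n) * i = ((n/2 : ℕ) : ZMod n) * (r : ℕ) := by
    rw [← hx]
    have : ((i.val : ℕ) : ZMod n) = 2 * (q:ℕ) + (r:ℕ) := by rw [hqr]; push_cast; ring
    rw [this]
    linear_combination (q : ZMod n) * h2
  interval_cases r
  · left; rw [this]; push_cast; ring
  · right; rw [this]; push_cast; ring

lemma shift_half (hs : 2 ≤ s) (hn : n = 2^s) (d : ZMod n → ZMod 2)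
    (hrec : ∀ k : ZMod n,
      ∑ i ∈ Finset.univ.filter (fun i => 2*i = k), d i = d k + d (k+1))
    (k : ZMod n) (h0 : k ≠ 0) (h1 : k ≠ ((n/2:ℕ) : ZMod n))
    (h2 : k + 1 ≠ 0) (h3 : k + 1 ≠ ((n/2:ℕ) : ZMod n)) :
    d (k + ((n/2:ℕ) : ZMod n)) = d k := by
  obtain ⟨e1, e2, e4, ed⟩ := half_pow hs hn
  have key : ∀ x : ZMod n, x ≠ 0 → x ≠ ((n/2:ℕ) : ZMod n) →
      ∑ i ∈ Finset.range (n/2), d (x + (i:ℕ)) = 0 := by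
    intro x hx0 hx1
    have hd := dyadic_sum d hrec (s-1) x
    rw [mu_pow hs hn] at hd
    rw [← e1] at hd
    rw [← hd]
    have : Finset.univ.filter (fun i : ZMod n => ((n/2:ℕ) : ZMod n) * i = x) = ∅ := by
      ext i
      simp only [Finset.mem_filter, Finset.mem_univ, true_and, Finset.notMem_empty, iff_false]
      intro h
      rcases mu_mul hs hn i with h' | h'
      · exact hx0 (by rw [← h, h'])
      · exact hx1 (by rw [← h, h'])
    rw [this, Finset.sum_empty]
  have hA := key k h0 h1
  have hB := key (k+1) h2 h3
  obtain ⟨M, hM⟩ : ∃ M, n/2 = M + 1 := ⟨n/2 - 1, by omega⟩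
  rw [hM] at hA hB
  rw [Finset.sum_range_succ'] at hA
  rw [Finset.sum_range_succ] at hB
  have hAB : ∑ i ∈ Finset.range M, d (k + ((i:ℕ)+1 : ℕ)) = ∑ i ∈ Finset.range M, d (k + 1 + (i:ℕ)) := by
    refine Finset.sum_congr rfl (fun i _ => ?_)
    congr 1
    push_cast
    ring
  rw [hAB] at hA
  have hS := z2_add_self (∑ i ∈ Finset.range M, d (k + 1 + (i:ℕ)))
  have hsum : d (k + (0:ℕ)) + d (k + 1 + (M:ℕ)) = 0 := by
    linear_combination hA + hB - hS
  have harg : k + 1 + (M:ℕ) = k + ((n/2:ℕ) : ZMod n) := by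
    have : ((n/2:ℕ) : ZMod n) = ((M:ℕ) : ZMod n) + 1 := by rw [hM]; push_cast; ring
    rw [this]; ring
  rw [harg] at hsum
  simp only [Nat.cast_zero, add_zero] at hsum
  exact (z2_add_eq_zero hsum).symm

end P4
section P5
open Stmt7Aux Finset
variable {n s : ℕ} [NeZero n]

lemma ne_of_val {a b : ℕ} (ha : a < n) (hb : b < n) (hne : a ≠ b) :
    (a : ZMod n) ≠ (b : ZMod n) := by
  intro h
  apply hne
  have := congrArg ZMod.val h
  rwa [valc ha, valc hb] at this

lemma inj_kernel (hs : 2 ≤ s) (hn : n = 2^s) (d : ZMod n → ZMod 2)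
    (hrec : ∀ k : ZMod n,
      ∑ i ∈ Finset.univ.filter (fun i => 2*i = k), d i = d k + d (k+1))
    (h0 : d 0 = 0) (h2 : d ((2:ℕ) : ZMod n) = 0) :
    ∀ k : ZMod n, d k = 0 := by
  obtain ⟨e1, e2, e4, ed⟩ := half_pow hs hn
  have h2' : d (2 : ZMod n) = 0 := by rwa [Nat.cast_ofNat] at h2
  have E : ∀ c : ZMod n, (ZMod.castHom ed (ZMod 2)) c = 1 → d (c+1) = d c := by
    intro c hc
    have hr := hrec c
    rw [filter_odd_empty ed c hc, Finset.sum_empty] at hr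
    exact (z2_add_eq_zero hr.symm).symm
  have oddcast : ∀ w : ℕ, w % 2 = 1 → (ZMod.castHom ed (ZMod 2)) ((w:ℕ) : ZMod n) = 1 := by
    intro w hw
    rw [map_natCast]
    obtain ⟨q, hq⟩ : ∃ q, w = 2*q + 1 := ⟨w/2, by omega⟩
    rw [hq]
    push_cast
    rw [show (2 : ZMod 2) = 0 from rfl]
    ring
  have hd1 : d (1 : ZMod n) = 0 := by
    have hE := E 1 (by rw [map_one])
    rw [show (1:ZMod n)+1 = 2 from by norm_num] at hE
    rw [← hE, h2']
  have chain : ∀ k : ℕ, 2 ≤ k → k ≤ n - 3 → d ((k:ℕ) : ZMod n) = 0 := by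
    intro k hk
    induction k, hk using Nat.le_induction with
    | base => intro _; exact h2
    | succ k hk ih =>
        intro hk1
        have hdk : d ((k:ℕ) : ZMod n) = 0 := ih (by omega)
        rcases Nat.even_or_odd k with he | ho
        · obtain ⟨j, hj⟩ := he
          have hj2 : k = 2*j := by omega
          have hjb1 : 1 ≤ j := by omega
          have hjb2 : j ≤ n/2 - 2 := by omega
          have hcast : ((k:ℕ) : ZMod n) = 2 * ((j:ℕ) : ZMod n) := by rw [hj2]; push_cast; ring
          have hr := hrec ((k:ℕ) : ZMod n)
          rw [hcast, sum_filter_two_mul e4 ed d] at hr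
          have hj1cast : ((j:ℕ) : ZMod n) + 1 = (((j+1:ℕ)) : ZMod n) := by push_cast; ring
          have hsh : d (((j:ℕ):ZMod n) + ((n/2:ℕ):ZMod n)) = d ((j:ℕ):ZMod n) := by
            apply shift_half hs hn d hrec
            · simpa using ne_of_val (n := n) (a := j) (b := 0) (by omega) (by omega) (by omega)
            · exact ne_of_val (by omega) (by omega) (by omega)
            · rw [hj1cast]
              simpa using ne_of_val (n := n) (a := j+1) (b := 0) (by omega) (by omega) (by omega)
            · rw [hj1cast]
              exact ne_of_val (by omega) (by omega) (by omega)
          rw [hsh] at hr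
          rw [z2_add_self] at hr
          have hkk : d ((k:ℕ):ZMod n) = d (((k:ℕ):ZMod n) + 1) := by
            rw [← hcast] at hr
            exact z2_add_eq_zero hr.symm
          have : (((k+1:ℕ)) : ZMod n) = ((k:ℕ):ZMod n) + 1 := by push_cast; ring
          rw [this, ← hkk, hdk]
        · have hE := E ((k:ℕ):ZMod n) (oddcast k (Nat.odd_iff.mp ho))
          have : (((k+1:ℕ)) : ZMod n) = ((k:ℕ):ZMod n) + 1 := by push_cast; ring
          rw [this, hE, hdk]
  intro k
  have hw : ((k.val : ℕ) : ZMod n) = k := castv k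
  have hwlt : k.val < n := ZMod.val_lt k
  have hcase : k.val = 0 ∨ k.val = 1 ∨ (2 ≤ k.val ∧ k.val ≤ n-3) ∨ k.val = n-2 ∨ k.val = n-1 := by
    omega
  rcases hcase with hv | hv | ⟨hv1, hv2⟩ | hv | hv
  · rw [← hw, hv, Nat.cast_zero]; exact h0
  · rw [← hw, hv, Nat.cast_one]; exact hd1
  · rw [← hw]; exact chain k.val hv1 hv2
  · rw [← hw, hv]
    have hE := E (((n-3:ℕ)):ZMod n) (oddcast (n-3) (by omega))
    have harg : (((n-3:ℕ)):ZMod n) + 1 = (((n-2:ℕ)):ZMod n) := by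
      rw [show (n-2:ℕ) = (n-3)+1 from by omega]; push_cast; ring
    rw [harg] at hE
    rw [hE]
    rcases (by omega : n - 3 = 1 ∨ 2 ≤ n - 3) with h43 | h43
    · rw [h43, Nat.cast_one]; exact hd1
    · exact chain (n-3) h43 (le_refl _)
  · rw [← hw, hv]
    have hneg : (((n-1:ℕ)):ZMod n) = -1 := by
      have hh : (((n-1:ℕ)):ZMod n) + 1 = 0 := by
        have h1 : (((n-1)+1 : ℕ) : ZMod n) = 0 := by
          rw [(by omega : n-1+1 = n), ZMod.natCast_self]
        rw [← h1]; push_cast; ring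
      linear_combination hh
    have hE := E (-1 : ZMod n) (by rw [map_neg, map_one]; decide)
    rw [neg_add_cancel] at hE
    rw [hneg, ← hE, h0]

end P5
section P6
open Stmt7Aux Finset
variable {n s : ℕ} [NeZero n]

/-- full symmetry on natural indices, from the G conditions -/
lemma g_sym (hs : 2 ≤ s) (hn : n = 2^s) (b : ZMod n → ZMod 2)
    (hb2 : b ((2 : ℕ) : ZMod n) = 0) (hb3 : b (((n - 3 : ℕ)) : ZMod n) = 0)
    (hbsym : ∀ i : ℕ, (i = 1 ∨ (3 ≤ i ∧ i ≤ n / 2 - 1)) →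
          b ((i : ℕ) : ZMod n) = b (((n - 1 - i : ℕ) : ZMod n))) :
    ∀ v : ℕ, 1 ≤ v → v ≤ n - 2 → b ((v : ℕ) : ZMod n) = b (((n - 1 - v : ℕ)) : ZMod n) := by
  obtain ⟨e1, e2, e4, ed⟩ := half_pow hs hn
  have hhalf : ∀ v : ℕ, 1 ≤ v → v ≤ n/2 - 1 → b ((v : ℕ) : ZMod n) = b (((n - 1 - v : ℕ)) : ZMod n) := by
    intro v h1 h2
    rcases (by omega : v = 1 ∨ v = 2 ∨ 3 ≤ v) with rfl | rfl | h3
    · exact hbsym 1 (Or.inl rfl)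
    · rw [hb2, (by omega : n - 1 - 2 = n - 3), hb3]
    · exact hbsym v (Or.inr ⟨h3, h2⟩)
  intro v h1 h2
  rcases (by omega : v ≤ n/2 - 1 ∨ n/2 ≤ v) with h | h
  · exact hhalf v h1 h
  · have := hhalf (n - 1 - v) (by omega) (by omega)
    rw [(by omega : n - 1 - (n - 1 - v) = v)] at this
    exact this.symm

/-- the relation `g* = z g + z + 1` in coefficient form -/
lemma g_star (hs : 2 ≤ s) (hn : n = 2^s) (b : ZMod n → ZMod 2)
    (hb0 : b 0 = 1) (hb1 : b (((n - 1 : ℕ)) : ZMod n) = 0)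
    (hsym : ∀ v : ℕ, 1 ≤ v → v ≤ n - 2 → b ((v : ℕ) : ZMod n) = b (((n - 1 - v : ℕ)) : ZMod n)) :
    ∀ i : ZMod n, b (-i) = b (i - 1) + (if i = 0 then 1 else 0) + (if i = 1 then 1 else 0) := by
  obtain ⟨e1, e2, e4, ed⟩ := half_pow hs hn
  have hneg : (((n-1:ℕ)):ZMod n) = -1 := by
    have h1 : (((n-1)+1 : ℕ) : ZMod n) = 0 := by
      rw [(by omega : n-1+1 = n), ZMod.natCast_self]
    have : (((n-1:ℕ)):ZMod n) + 1 = 0 := by rw [← h1]; push_cast; ring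
    linear_combination this
  have h01 : (0 : ZMod n) ≠ 1 := by
    simpa using ne_of_val (n := n) (a := 0) (b := 1) (by omega) (by omega) (by omega)
  intro i
  by_cases hi0 : i = 0
  · subst hi0
    rw [neg_zero, if_pos rfl, if_neg h01, hb0, zero_sub, ← hneg, hb1]
    decide
  · by_cases hi1 : i = 1
    · subst hi1
      rw [if_neg hi0, if_pos rfl, ← hneg, hb1, sub_self, hb0]
      decide
    · rw [if_neg hi0, if_neg hi1, add_zero, add_zero]
      have hv1 : 1 ≤ i.val := by
        rcases Nat.eq_zero_or_pos i.val with h | h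
        · exfalso; apply hi0; rw [← castv i, h, Nat.cast_zero]
        · exact h
      have hv2 : i.val ≤ n - 1 := by have := ZMod.val_lt i; omega
      have hvne1 : i.val ≠ 1 := by
        intro h
        apply hi1
        rw [← castv i, h, Nat.cast_one]
      have hmi : -i = (((n - i.val : ℕ)) : ZMod n) := by
        have : ((n : ℕ) : ZMod n) = 0 := ZMod.natCast_self n
        rw [Nat.cast_sub (by omega), this, castv]
        ring
      have hi1' : i - 1 = (((i.val - 1 : ℕ)) : ZMod n) := by
        rw [Nat.cast_sub (by omega), castv, Nat.cast_one]
      rw [hmi, hi1']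
      have := hsym (i.val - 1) (by omega) (by omega)
      rw [(by omega : n - 1 - (i.val - 1) = n - i.val)] at this
      exact this.symm

end P6
section P7
open Stmt7Aux Finset
variable {n s : ℕ} [NeZero n]

lemma conv_formula (b : ZMod n → ZMod 2)
    (hstar : ∀ i : ZMod n, b (-i) = b (i - 1) + (if i = 0 then 1 else 0) + (if i = 1 then 1 else 0)) :
    ∀ k : ZMod n, cconv n b (cstar n b) k
      = (∑ i ∈ Finset.univ.filter (fun i => 2*i = k - 1), b i) + b k + b (k - 1) := by
  intro k
  simp only [cconv, cstar]
  have hterm : ∀ i : ZMod n, b (-(k-i))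
      = b ((k-1) - i) + (if i = k then 1 else 0) + (if i = k - 1 then 1 else 0) := by
    intro i
    have h := hstar (k - i)
    have e1 : k - i - 1 = (k-1) - i := by ring
    rw [e1] at h
    have e2 : (if k - i = 0 then (1:ZMod 2) else 0) = (if i = k then 1 else 0) := by
      by_cases hh : i = k
      · rw [if_pos hh, if_pos (by rw [hh]; ring)]
      · rw [if_neg hh, if_neg (fun hc => hh (by linear_combination -hc))]
    have e3 : (if k - i = 1 then (1:ZMod 2) else 0) = (if i = k - 1 then 1 else 0) := by
      by_cases hh : i = k - 1
      · rw [if_pos hh, if_pos (by rw [hh]; ring)]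
      · rw [if_neg hh, if_neg (fun hc => hh (by linear_combination -hc))]
    rw [e2, e3] at h
    exact h
  calc ∑ i : ZMod n, b i * b (-(k-i))
      = ∑ i : ZMod n, (b i * b ((k-1)-i) + b i * (if i = k then 1 else 0)
          + b i * (if i = k - 1 then 1 else 0)) := by
        refine Finset.sum_congr rfl (fun i _ => ?_)
        rw [hterm i]; ring
  _ = (∑ i : ZMod n, b i * b ((k-1)-i)) + (∑ i : ZMod n, b i * (if i = k then 1 else 0))
        + (∑ i : ZMod n, b i * (if i = k - 1 then 1 else 0)) := by
        rw [Finset.sum_add_distrib, Finset.sum_add_distrib]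
  _ = (∑ i ∈ Finset.univ.filter (fun i => 2*i = k - 1), b i) + b k + b (k - 1) := by
        rw [sum_mul_reflect b (k-1)]
        congr 1
        · congr 1
          simp only [mul_ite, mul_one, mul_zero]
          rw [Finset.sum_ite_eq' Finset.univ k b]
          simp
        · simp only [mul_ite, mul_one, mul_zero]
          rw [Finset.sum_ite_eq' Finset.univ (k-1) b]
          simp

lemma conv_symm (g : ZMod n → ZMod 2) (k : ZMod n) :
    cconv n g (cstar n g) (-k) = cconv n g (cstar n g) k := by
  simp only [cconv, cstar]
  refine Fintype.sum_equiv (Equiv.addRight k) _ _ (fun i => ?_)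
  simp only [Equiv.coe_addRight]
  have e1 : -(-k - i) = k + i := by ring
  have e2 : -(k - (i + k)) = i := by ring
  rw [e1, e2, mul_comm, add_comm k i]

end P7
section P8
open Stmt7Aux Finset
variable {n s : ℕ} [NeZero n]

lemma cast_pred (h1 : 1 ≤ n) : (((n-1:ℕ)):ZMod n) = -1 := by
  have hh : (((n-1)+1 : ℕ) : ZMod n) = 0 := by
    rw [(by omega : n-1+1 = n), ZMod.natCast_self]
  have : (((n-1:ℕ)):ZMod n) + 1 = 0 := by rw [← hh]; push_cast; ring
  linear_combination this

lemma phi_odd (ed : 2 ∣ n) (w : ℕ) (hw : w % 2 = 1) :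
    (ZMod.castHom ed (ZMod 2)) ((w:ℕ) : ZMod n) = 1 := by
  rw [map_natCast]
  obtain ⟨q, hq⟩ : ∃ q, w = 2*q + 1 := ⟨w/2, by omega⟩
  rw [hq]
  push_cast
  rw [show (2 : ZMod 2) = 0 from rfl]
  ring

lemma phi_neg_one (ed : 2 ∣ n) : (ZMod.castHom ed (ZMod 2)) (-1 : ZMod n) = 1 := by
  rw [map_neg, map_one]; decide

lemma mapsto_H (hs : 2 ≤ s) (hn : n = 2^s) (b : ZMod n → ZMod 2)
    (hb0 : b 0 = 1) (hb1 : b (((n - 1 : ℕ)) : ZMod n) = 0)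
    (hb2 : b ((2 : ℕ) : ZMod n) = 0) (hb3 : b (((n - 3 : ℕ)) : ZMod n) = 0)
    (hbsym : ∀ i : ℕ, (i = 1 ∨ (3 ≤ i ∧ i ≤ n / 2 - 1)) →
          b ((i : ℕ) : ZMod n) = b (((n - 1 - i : ℕ) : ZMod n))) :
    cconv n b (cstar n b) 0 = 1
    ∧ cconv n b (cstar n b) ((n / 2 : ℕ) : ZMod n) = 0
    ∧ (∀ i : ℕ, 1 ≤ i → i ≤ n / 2 - 1 →
        cconv n b (cstar n b) ((i : ℕ) : ZMod n) = cconv n b (cstar n b) (((n - i : ℕ) : ZMod n)))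
    ∧ ∑ i ∈ (Finset.Ico 1 (n / 2)).filter (fun i => Odd i),
        cconv n b (cstar n b) ((i : ℕ) : ZMod n) = 0 := by
  obtain ⟨e1, e2, e4, ed⟩ := half_pow hs hn
  have hm2 : 2 ∣ n/2 := by rw [e1]; exact dvd_pow_self 2 (by omega)
  have e5 : n/2 = 2 * (n/2/2) := by
    have h1 : s - 2 + 1 = s - 1 := by omega
    have h2 : 2^(s-1) = 2 * 2^(s-2) := by
      calc 2^(s-1) = 2^(s-2+1) := by rw [h1]
      _ = 2^(s-2)*2 := pow_succ 2 (s-2)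
      _ = 2*2^(s-2) := by ring
    omega
  have hsym := g_sym hs hn b hb2 hb3 hbsym
  have hstar := g_star hs hn b hb0 hb1 hsym
  have hphi := conv_formula b hstar
  refine ⟨?_, ?_, ?_, ?_⟩
  · -- a 0 = 1
    rw [hphi 0]
    have h1 : (0:ZMod n) - 1 = -1 := by ring
    rw [h1, filter_odd_empty ed _ (phi_neg_one ed), Finset.sum_empty, hb0,
      ← cast_pred (by omega), hb1]
    decide
  · -- a (n/2) = 0
    rw [hphi]
    have hk1 : (((n/2 : ℕ)) : ZMod n) - 1 = (((n/2 - 1 : ℕ)) : ZMod n) := by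
      rw [Nat.cast_sub (by omega), Nat.cast_one]
    rw [hk1, filter_odd_empty ed _ (phi_odd ed (n/2-1) (by omega)), Finset.sum_empty]
    have hup := hsym (n/2) (by omega) (by omega)
    rw [(by omega : n - 1 - n/2 = n/2 - 1)] at hup
    rw [hup, zero_add]
    exact z2_add_self _
  · -- symmetry
    intro i h1 h2
    have hneg : (((n - i : ℕ)) : ZMod n) = -(((i:ℕ)) : ZMod n) := by
      rw [Nat.cast_sub (by omega), ZMod.natCast_self]
      ring
    rw [hneg, conv_symm]
  · -- parity sum
    have hre : ∑ i ∈ (Finset.Ico 1 (n / 2)).filter (fun i => Odd i),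
        cconv n b (cstar n b) ((i : ℕ) : ZMod n)
        = ∑ j ∈ Finset.range (n/2/2), cconv n b (cstar n b) (((2*j+1 : ℕ)) : ZMod n) := by
      refine Finset.sum_nbij' (fun i => (i-1)/2) (fun j => 2*j+1) ?_ ?_ ?_ ?_ ?_
      · intro i hi
        simp only [Finset.mem_filter, Finset.mem_Ico, Nat.odd_iff] at hi
        simp only [Finset.mem_range]
        omega
      · intro j hj
        simp only [Finset.mem_range] at hj
        simp only [Finset.mem_filter, Finset.mem_Ico, Nat.odd_iff]
        omega
      · intro i hi
        simp only [Finset.mem_filter, Finset.mem_Ico, Nat.odd_iff] at hi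
        show 2*((i-1)/2)+1 = i
        omega
      · intro j hj
        show (2*j+1-1)/2 = j
        omega
      · intro i hi
        simp only [Finset.mem_filter, Finset.mem_Ico, Nat.odd_iff] at hi
        rw [(by omega : 2*((i-1)/2)+1 = i)]
    rw [hre]
    have hterm : ∀ j ∈ Finset.range (n/2/2),
        cconv n b (cstar n b) (((2*j+1 : ℕ)) : ZMod n)
        = b ((j:ℕ) : ZMod n) + b (((n/2 - 1 - j : ℕ)) : ZMod n)
          + b (((2*j+1 : ℕ)) : ZMod n) + b (((2*j : ℕ)) : ZMod n) := by
      intro j hj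
      simp only [Finset.mem_range] at hj
      rw [hphi]
      have hA : (((2*j+1 : ℕ)) : ZMod n) - 1 = ((2*j : ℕ) : ZMod n) := by push_cast; ring
      rw [hA]
      have hB : ((2*j : ℕ) : ZMod n) = 2 * ((j:ℕ) : ZMod n) := by push_cast; ring
      rw [hB, sum_filter_two_mul e4 ed b, ← hB]
      have hmu : ((j:ℕ) : ZMod n) + (((n/2:ℕ)) : ZMod n) = (((j + n/2 : ℕ)) : ZMod n) := by
        push_cast; ring
      rw [hmu]
      have hup := hsym (j + n/2) (by omega) (by omega)
      rw [(by omega : n - 1 - (j + n/2) = n/2 - 1 - j)] at hup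
      rw [hup]
    rw [Finset.sum_congr rfl hterm]
    rw [Finset.sum_add_distrib, Finset.sum_add_distrib, Finset.sum_add_distrib]
    have hrefl : ∑ j ∈ Finset.range (n/2/2), b (((n/2 - 1 - j : ℕ)) : ZMod n)
        = ∑ j ∈ Finset.range (n/2/2), b (((n/2/2 + j : ℕ)) : ZMod n) := by
      rw [← Finset.sum_range_reflect (fun j => b (((n/2/2 + j : ℕ)) : ZMod n)) (n/2/2)]
      refine Finset.sum_congr rfl (fun j hj => ?_)
      simp only [Finset.mem_range] at hj
      congr 2
      omega
    rw [hrefl]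
    have hsplit1 : ∑ j ∈ Finset.range (n/2/2), b ((j:ℕ) : ZMod n)
        + ∑ j ∈ Finset.range (n/2/2), b (((n/2/2 + j : ℕ)) : ZMod n)
        = ∑ i ∈ Finset.range (n/2), b ((i:ℕ) : ZMod n) := by
      have e6 : n/2/2 + n/2/2 = n/2 := by omega
      conv_rhs => rw [← e6]
      rw [Finset.sum_range_add (fun i => b ((i:ℕ) : ZMod n)) (n/2/2) (n/2/2)]
    have hsplit2 : ∑ j ∈ Finset.range (n/2/2), b (((2*j+1 : ℕ)) : ZMod n)
        + ∑ j ∈ Finset.range (n/2/2), b (((2*j : ℕ)) : ZMod n)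
        = ∑ i ∈ Finset.range (n/2), b ((i:ℕ) : ZMod n) := by
      conv_rhs => rw [e5]
      rw [sum_range_double (fun i => b ((i:ℕ) : ZMod n)) (n/2/2), ← Finset.sum_add_distrib]
      refine Finset.sum_congr rfl (fun j hj => ?_)
      ring
    have hz := z2_add_self (∑ i ∈ Finset.range (n/2), b ((i:ℕ) : ZMod n))
    linear_combination hsplit1 + hsplit2 + hz

end P8
def theta (n : ℕ) [NeZero n] (a : ZMod n → ZMod 2) : ZMod n → ZMod 2 := fun k =>
  if k.val = 0 then 1
  else if k.val = n - 1 then 0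
  else if min k.val (n - 1 - k.val) = 2 then 0
  else if min k.val (n - 1 - k.val) = 1 then a ((2:ℕ) : ZMod n)
  else a ((min k.val (n - 1 - k.val) : ℕ) : ZMod n)

section P9
open Stmt7Aux Finset
variable {n s : ℕ} [NeZero n]

lemma theta_mapsto (hs : 2 ≤ s) (hn : n = 2^s) (a : ZMod n → ZMod 2)
    (ham : a ((n / 2 : ℕ) : ZMod n) = 0) :
    theta n a 0 = 1
    ∧ theta n a (((n - 1 : ℕ)) : ZMod n) = 0
    ∧ theta n a ((2 : ℕ) : ZMod n) = 0
    ∧ theta n a (((n - 3 : ℕ)) : ZMod n) = 0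
    ∧ ∀ i : ℕ, (i = 1 ∨ (3 ≤ i ∧ i ≤ n / 2 - 1)) →
        theta n a ((i : ℕ) : ZMod n) = theta n a (((n - 1 - i : ℕ) : ZMod n)) := by
  obtain ⟨e1, e2, e4, ed⟩ := half_pow hs hn
  have h45 : n = 4 ∨ 5 ≤ n := by omega
  refine ⟨?_, ?_, ?_, ?_, ?_⟩
  · simp [theta, ZMod.val_zero]
  · have v : (((n-1:ℕ)) : ZMod n).val = n - 1 := valc (by omega)
    simp only [theta, v]
    rw [if_neg (show ¬ n-1 = 0 by omega)]
    simp
  · have v : (((2:ℕ)) : ZMod n).val = 2 := valc (by omega)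
    simp only [theta, v]
    rw [if_neg (by omega), if_neg (by omega)]
    rcases h45 with h4 | h5
    · rw [if_neg (by omega), if_pos (by omega)]
      rw [← ham, (by omega : n/2 = 2)]
    · rw [if_pos (by omega)]
  · have v : (((n-3:ℕ)) : ZMod n).val = n - 3 := valc (by omega)
    simp only [theta, v]
    rw [if_neg (by omega), if_neg (by omega)]
    rcases h45 with h4 | h5
    · rw [if_neg (by omega), if_pos (by omega)]
      rw [← ham, (by omega : n/2 = 2)]
    · rw [if_pos (by omega)]
  · intro i hi
    have hib : 1 ≤ i ∧ i ≤ n/2 - 1 := by rcases hi with rfl | ⟨h3, h4⟩ <;> omega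
    have v1 : (((i:ℕ)) : ZMod n).val = i := valc (by omega)
    have v2 : (((n-1-i:ℕ)) : ZMod n).val = n - 1 - i := valc (by omega)
    simp only [theta, v1, v2]
    rw [(by omega : min i (n-1-i) = i), (by omega : min (n-1-i) (n-1-(n-1-i)) = i)]
    rw [if_neg (by omega : ¬ i = 0), if_neg (by omega : ¬ i = n-1),
      if_neg (by omega : ¬ n-1-i = 0), if_neg (by omega : ¬ n-1-i = n-1)]

lemma theta_inj (hs : 2 ≤ s) (hn : n = 2^s) (a a' : ZMod n → ZMod 2)
    (ha0 : a 0 = 1) (ham : a ((n / 2 : ℕ) : ZMod n) = 0)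
    (hasym : ∀ i : ℕ, 1 ≤ i → i ≤ n / 2 - 1 → a ((i : ℕ) : ZMod n) = a (((n - i : ℕ) : ZMod n)))
    (hpar : ∑ i ∈ (Finset.Ico 1 (n / 2)).filter (fun i => Odd i), a ((i : ℕ) : ZMod n) = 0)
    (ha0' : a' 0 = 1) (ham' : a' ((n / 2 : ℕ) : ZMod n) = 0)
    (hasym' : ∀ i : ℕ, 1 ≤ i → i ≤ n / 2 - 1 → a' ((i : ℕ) : ZMod n) = a' (((n - i : ℕ) : ZMod n)))
    (hpar' : ∑ i ∈ (Finset.Ico 1 (n / 2)).filter (fun i => Odd i), a' ((i : ℕ) : ZMod n) = 0)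
    (hth : theta n a = theta n a') : a = a' := by
  obtain ⟨e1, e2, e4, ed⟩ := half_pow hs hn
  have key3 : ∀ i : ℕ, 3 ≤ i → i ≤ n/2 - 1 → a ((i:ℕ) : ZMod n) = a' ((i:ℕ) : ZMod n) := by
    intro i h3 h4
    have hf := congrFun hth ((i:ℕ) : ZMod n)
    have v : (((i:ℕ)) : ZMod n).val = i := valc (by omega)
    simp only [theta, v] at hf
    rw [(by omega : min i (n-1-i) = i)] at hf
    simp only [if_neg (show ¬ i = 0 by omega), if_neg (show ¬ i = n-1 by omega),
      if_neg (show ¬ i = 2 by omega), if_neg (show ¬ i = 1 by omega)] at hf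
    exact hf
  have key2 : a ((2:ℕ) : ZMod n) = a' ((2:ℕ) : ZMod n) := by
    have hf := congrFun hth ((1:ℕ) : ZMod n)
    have v : (((1:ℕ)) : ZMod n).val = 1 := valc (by omega)
    simp only [theta, v] at hf
    rw [(by omega : min 1 (n-1-1) = 1)] at hf
    simp only [if_neg (show ¬ (1:ℕ) = 0 by omega), if_neg (show ¬ (1:ℕ) = n-1 by omega),
      if_neg (show ¬ (1:ℕ) = 2 by omega), if_pos (show (1:ℕ) = 1 from rfl)] at hf
    exact hf
  have hins : (Finset.Ico 1 (n / 2)).filter (fun i => Odd i)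
      = insert 1 ((Finset.Ico 3 (n / 2)).filter (fun i => Odd i)) := by
    ext i
    simp only [Finset.mem_filter, Finset.mem_Ico, Finset.mem_insert, Nat.odd_iff]
    omega
  have hsub : ∑ i ∈ (Finset.Ico 3 (n / 2)).filter (fun i => Odd i), a ((i:ℕ) : ZMod n)
      = ∑ i ∈ (Finset.Ico 3 (n / 2)).filter (fun i => Odd i), a' ((i:ℕ) : ZMod n) := by
    refine Finset.sum_congr rfl (fun i hi => ?_)
    simp only [Finset.mem_filter, Finset.mem_Ico] at hi
    exact key3 i (by omega) (by omega)
  have hnotmem : (1:ℕ) ∉ (Finset.Ico 3 (n / 2)).filter (fun i => Odd i) := by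
    simp [Finset.mem_filter, Finset.mem_Ico]
  rw [hins, Finset.sum_insert hnotmem] at hpar hpar'
  have key1 : a ((1:ℕ) : ZMod n) = a' ((1:ℕ) : ZMod n) := by
    have h1 := z2_add_eq_zero hpar
    have h2 := z2_add_eq_zero hpar'
    rw [h1, h2, hsub]
  have low : ∀ w : ℕ, 1 ≤ w → w ≤ n/2 - 1 → a ((w:ℕ) : ZMod n) = a' ((w:ℕ) : ZMod n) := by
    intro w h1 h2
    rcases (by omega : w = 1 ∨ w = 2 ∨ 3 ≤ w) with rfl | rfl | h3
    · exact key1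
    · exact key2
    · exact key3 w h3 h2
  funext k
  have hw : ((k.val : ℕ) : ZMod n) = k := castv k
  have hwlt : k.val < n := ZMod.val_lt k
  rcases (by omega : k.val = 0 ∨ (1 ≤ k.val ∧ k.val ≤ n/2 - 1) ∨ k.val = n/2
      ∨ (n/2 + 1 ≤ k.val ∧ k.val ≤ n - 1)) with hv | ⟨hv1, hv2⟩ | hv | ⟨hv1, hv2⟩
  · have : k = 0 := by rw [← hw, hv, Nat.cast_zero]
    rw [this, ha0, ha0']
  · rw [← hw]; exact low k.val hv1 hv2
  · have : k = ((n/2 : ℕ) : ZMod n) := by rw [← hw, hv]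
    rw [this, ham, ham']
  · rw [← hw]
    have h1 := hasym (n - k.val) (by omega) (by omega)
    have h2 := hasym' (n - k.val) (by omega) (by omega)
    rw [(by omega : n - (n - k.val) = k.val)] at h1 h2
    rw [← h1, ← h2]
    exact low (n - k.val) (by omega) (by omega)

end P9

theorem stmt_7 (n s : ℕ) [NeZero n] (hs : 2 ≤ s) (hn : n = 2 ^ s) :
    Set.BijOn (fun g => cconv n g (cstar n g))
      {b : ZMod n → ZMod 2 | b 0 = 1 ∧ b (((n - 1 : ℕ) : ZMod n)) = 0 ∧
        b ((2 : ℕ) : ZMod n) = 0 ∧ b (((n - 3 : ℕ) : ZMod n)) = 0 ∧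
        ∀ i : ℕ, (i = 1 ∨ (3 ≤ i ∧ i ≤ n / 2 - 1)) →
          b ((i : ℕ) : ZMod n) = b (((n - 1 - i : ℕ) : ZMod n))}
      {a : ZMod n → ZMod 2 | a 0 = 1 ∧ a ((n / 2 : ℕ) : ZMod n) = 0 ∧
        (∀ i : ℕ, 1 ≤ i → i ≤ n / 2 - 1 → a ((i : ℕ) : ZMod n) = a (((n - i : ℕ) : ZMod n))) ∧
        ∑ i ∈ (Finset.Ico 1 (n / 2)).filter (fun i => Odd i), a ((i : ℕ) : ZMod n) = 0} := by
  classical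
  set Gs : Set (ZMod n → ZMod 2) :=
      {b : ZMod n → ZMod 2 | b 0 = 1 ∧ b (((n - 1 : ℕ) : ZMod n)) = 0 ∧
        b ((2 : ℕ) : ZMod n) = 0 ∧ b (((n - 3 : ℕ) : ZMod n)) = 0 ∧
        ∀ i : ℕ, (i = 1 ∨ (3 ≤ i ∧ i ≤ n / 2 - 1)) →
          b ((i : ℕ) : ZMod n) = b (((n - 1 - i : ℕ) : ZMod n))} with hGs
  set Hs : Set (ZMod n → ZMod 2) :=
      {a : ZMod n → ZMod 2 | a 0 = 1 ∧ a ((n / 2 : ℕ) : ZMod n) = 0 ∧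
        (∀ i : ℕ, 1 ≤ i → i ≤ n / 2 - 1 → a ((i : ℕ) : ZMod n) = a (((n - i : ℕ) : ZMod n))) ∧
        ∑ i ∈ (Finset.Ico 1 (n / 2)).filter (fun i => Odd i), a ((i : ℕ) : ZMod n) = 0} with hHs
  have hmaps : Set.MapsTo (fun g => cconv n g (cstar n g)) Gs Hs := by
    intro b hb
    rw [hGs, Set.mem_setOf_eq] at hb
    obtain ⟨hb0, hb1, hb2, hb3, hbsym⟩ := hb
    rw [hHs, Set.mem_setOf_eq]
    exact mapsto_H hs hn b hb0 hb1 hb2 hb3 hbsym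
  have hinj : Set.InjOn (fun g => cconv n g (cstar n g)) Gs := by
    intro b1 h1 b2 h2 heq
    rw [hGs, Set.mem_setOf_eq] at h1 h2
    obtain ⟨c10, c11, c12, c13, c1s⟩ := h1
    obtain ⟨c20, c21, c22, c23, c2s⟩ := h2
    have hphi1 := conv_formula b1 (g_star hs hn b1 c10 c11 (g_sym hs hn b1 c12 c13 c1s))
    have hphi2 := conv_formula b2 (g_star hs hn b2 c20 c21 (g_sym hs hn b2 c22 c23 c2s))
    have hrec : ∀ k : ZMod n, ∑ i ∈ Finset.univ.filter (fun i => 2*i = k), (b1 i + b2 i)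
        = (b1 k + b2 k) + (b1 (k+1) + b2 (k+1)) := by
      intro k
      have e : (k+1) - 1 = k := by ring
      have h1' := hphi1 (k+1); rw [e] at h1'
      have h2' := hphi2 (k+1); rw [e] at h2'
      have he : cconv n b1 (cstar n b1) (k+1) = cconv n b2 (cstar n b2) (k+1) :=
        congrFun heq (k+1)
      have E : (∑ i ∈ Finset.univ.filter (fun i => 2*i = k), b1 i) + b1 (k+1) + b1 k
          = (∑ i ∈ Finset.univ.filter (fun i => 2*i = k), b2 i) + b2 (k+1) + b2 k := by
        rw [← h1', ← h2', he]
      rw [Finset.sum_add_distrib]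
      have hzS := Stmt7Aux.z2_add_self (∑ i ∈ Finset.univ.filter (fun i : ZMod n => 2*i = k), b2 i)
      have hza := Stmt7Aux.z2_add_self (b1 k)
      have hzb := Stmt7Aux.z2_add_self (b1 (k+1))
      linear_combination E + hzS - hza - hzb
    have h0 : b1 0 + b2 0 = 0 := by rw [c10, c20]; decide
    have h2' : b1 ((2:ℕ) : ZMod n) + b2 ((2:ℕ) : ZMod n) = 0 := by rw [c12, c22]; decide
    have hdz := inj_kernel hs hn (fun k => b1 k + b2 k) hrec h0 h2'
    funext k
    exact Stmt7Aux.z2_add_eq_zero (hdz k)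
  have hthm : Set.MapsTo (theta n) Hs Gs := by
    intro a ha
    rw [hHs, Set.mem_setOf_eq] at ha
    rw [hGs, Set.mem_setOf_eq]
    exact theta_mapsto hs hn a ha.2.1
  have hthinj : Set.InjOn (theta n) Hs := by
    intro a ha a' ha' h
    rw [hHs, Set.mem_setOf_eq] at ha ha'
    exact theta_inj hs hn a a' ha.1 ha.2.1 ha.2.2.1 ha.2.2.2 ha'.1 ha'.2.1 ha'.2.2.1 ha'.2.2.2 h
  have hle : Hs.ncard ≤ Gs.ncard :=
    Set.ncard_le_ncard_of_injOn (theta n) hthm hthinj (Set.toFinite _)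
  have himg : (fun g => cconv n g (cstar n g)) '' Gs ⊆ Hs := Set.MapsTo.image_subset hmaps
  have hcard : ((fun g => cconv n g (cstar n g)) '' Gs).ncard = Gs.ncard :=
    Set.ncard_image_of_injOn hinj
  have heq : (fun g => cconv n g (cstar n g)) '' Gs = Hs :=
    Set.eq_of_subset_of_ncard_le himg (by rw [hcard]; exact hle) (Set.toFinite _)
  exact ⟨hmaps, hinj, heq.symm.subset⟩
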